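/- Let T be a tree with at least two vertices and let s be a real number. Then the deformed Laplacian matrix M_T(s) is positive definite if and only if |s| < 1. -/

import Mathlib

open Filter Topology

/-- The deformed Laplacian matrix `M_G(s) = I - s·A + s²·(D - I)` of a finite simple graph. -/
noncomputable def defLap {V : Type*} [Fintype V] [DecidableEq V] (G : SimpleGraph V) (s : ℝ) :
    Matrix V V ℝ :=
  letI := Classical.decRel G.Adj
  (1 : Matrix V V ℝ) - s • (G.adjMatrix ℝ) +
    s ^ 2 • (Matrix.diagonal (fun v => (G.degree v : ℝ)) - 1)

/-- The largest (real) eigenvalue of a matrix. -/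
noncomputable def lamMax {V : Type*} [Fintype V] (M : Matrix V V ℝ) : ℝ :=
  sSup {μ : ℝ | ∃ v : V → ℝ, v ≠ 0 ∧ M.mulVec v = μ • v}

section Aux
open SimpleGraph Finset
variable {V : Type*} [Fintype V] [DecidableEq V] {T : SimpleGraph V}
set_option linter.unusedSectionVars false

lemma tree_dist_le_of_mem_support {r u v : V} (w : T.Walk r u) (h : v ∈ w.support) :
    T.dist r v ≤ w.length :=
  le_trans (SimpleGraph.dist_le _) (w.length_takeUntil_le h)

lemma tree_exists_parent (hc : T.Connected) (r : V) {v : V} (hv : v ≠ r) :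
    ∃ u, T.Adj u v ∧ T.dist r u + 1 = T.dist r v := by
  obtain ⟨w, hw⟩ := hc.exists_walk_length_eq_dist v r
  cases w with
  | nil => exact absurd rfl hv
  | @cons _ u _ h q =>
    refine ⟨u, h.symm, ?_⟩
    have h1 : T.dist r u ≤ q.length := by
      rw [SimpleGraph.dist_comm]; exact SimpleGraph.dist_le q
    have h2 : T.dist r v ≤ T.dist r u + T.dist u v :=
      hc.dist_triangle
    have h3 : T.dist u v = 1 := by
      rw [SimpleGraph.dist_comm]; exact SimpleGraph.dist_eq_one_iff_adj.mpr h
    have h4 : q.length + 1 = T.dist r v := by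
      rw [SimpleGraph.dist_comm]; simpa [Nat.add_comm] using hw
    omega

lemma tree_concat_isPath {r u v : V} {P : T.Walk r u} (hP : P.IsPath) (h : T.Adj u v)
    (hv : v ∉ P.support) : (P.concat h).IsPath := by
  rw [← SimpleGraph.Walk.isPath_reverse_iff, SimpleGraph.Walk.reverse_concat]
  exact SimpleGraph.Walk.IsPath.cons hP.reverse
    (by simpa [SimpleGraph.Walk.support_reverse] using hv)

lemma tree_adj_dist_ne (hT : T.IsTree) (r : V) {u v : V} (h : T.Adj u v) :
    T.dist r u ≠ T.dist r v := by
  intro heq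
  obtain ⟨P, hP, hPl⟩ := hT.isConnected.exists_path_of_dist r u
  obtain ⟨Q, hQ, hQl⟩ := hT.isConnected.exists_path_of_dist r v
  have hvP : v ∉ P.support := by
    intro hvP
    have h2 : T.dist r v ≤ (P.takeUntil v hvP).length := SimpleGraph.dist_le _
    have h4 : (P.takeUntil v hvP).length + (P.dropUntil v hvP).length = P.length := by
      rw [← SimpleGraph.Walk.length_append, P.take_spec hvP]
    have h5 : (P.dropUntil v hvP).length = 0 := by omega
    exact h.ne' (SimpleGraph.Walk.eq_of_length_eq_zero h5)
  have hP' : (P.concat h).IsPath := tree_concat_isPath hP h hvP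
  obtain ⟨W, _, hU⟩ := hT.existsUnique_path r v
  have e1 := hU _ hP'
  have e2 := hU _ hQ
  have : (P.concat h).length = Q.length := by rw [e1, e2]
  rw [SimpleGraph.Walk.length_concat] at this
  omega

lemma tree_parent_unique (hT : T.IsTree) (r : V) {v u₁ u₂ : V} (h₁ : T.Adj u₁ v) (h₂ : T.Adj u₂ v)
    (hd₁ : T.dist r u₁ + 1 = T.dist r v) (hd₂ : T.dist r u₂ + 1 = T.dist r v) : u₁ = u₂ := by
  obtain ⟨P₁, hP₁, hl₁⟩ := hT.isConnected.exists_path_of_dist r u₁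
  obtain ⟨P₂, hP₂, hl₂⟩ := hT.isConnected.exists_path_of_dist r u₂
  have hv₁ : v ∉ P₁.support := fun hm => by
    have := tree_dist_le_of_mem_support P₁ hm; omega
  have hv₂ : v ∉ P₂.support := fun hm => by
    have := tree_dist_le_of_mem_support P₂ hm; omega
  obtain ⟨W, _, hU⟩ := hT.existsUnique_path r v
  have e : P₁.concat h₁ = P₂.concat h₂ := by
    rw [hU _ (tree_concat_isPath hP₁ h₁ hv₁), hU _ (tree_concat_isPath hP₂ h₂ hv₂)]
  exact (SimpleGraph.Walk.concat_inj e).1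

end Aux

open Matrix in
theorem stmt8 {V : Type*} [Fintype V] [DecidableEq V] (T : SimpleGraph V)
    (hT : T.IsTree) (hcard : 2 ≤ Fintype.card V) (s : ℝ) :
    (defLap T s).PosDef ↔ |s| < 1 := by
  letI : DecidableRel T.Adj := Classical.decRel T.Adj
  have hconn : T.Connected := hT.isConnected
  obtain ⟨r⟩ : Nonempty V := Fintype.card_pos_iff.mp (by omega)
  have hpar : ∀ v : V, v ≠ r → ∃ u, T.Adj u v ∧ T.dist r u + 1 = T.dist r v :=
    fun v hv => tree_exists_parent hconn r hv
  set p : V → V := fun v => if h : v = r then r else (hpar v h).choose with hp_def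
  have hp_adj : ∀ v, v ≠ r → T.Adj (p v) v := by
    intro v hv; rw [hp_def]; simp only [dif_neg hv]; exact (hpar v hv).choose_spec.1
  have hp_dist : ∀ v, v ≠ r → T.dist r (p v) + 1 = T.dist r v := by
    intro v hv; rw [hp_def]; simp only [dif_neg hv]; exact (hpar v hv).choose_spec.2
  -- trichotomy
  have htri : ∀ u v : V, T.Adj u v →
      (T.dist r u + 1 = T.dist r v ∨ T.dist r v + 1 = T.dist r u) := by
    intro u v h
    have hne := tree_adj_dist_ne hT r h
    have h1 : T.dist r v ≤ T.dist r u + T.dist u v := hconn.dist_triangle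
    have h2 : T.dist r u ≤ T.dist r v + T.dist v u := hconn.dist_triangle
    have h3 : T.dist u v = 1 := SimpleGraph.dist_eq_one_iff_adj.mpr h
    have h4 : T.dist v u = 1 := SimpleGraph.dist_eq_one_iff_adj.mpr h.symm
    omega
  -- neighbors below
  have hfilter : ∀ u : V, (T.neighborFinset u).filter (fun v => T.dist r v + 1 = T.dist r u)
      = if h : u = r then (∅ : Finset V) else {p u} := by
    intro u
    split_ifs with h
    · subst h
      ext v
      simp [SimpleGraph.dist_self]
    · ext v
      simp only [Finset.mem_filter, SimpleGraph.mem_neighborFinset, Finset.mem_singleton]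
      constructor
      · rintro ⟨hadj, hdist⟩
        exact tree_parent_unique hT r hadj.symm (hp_adj u h) hdist (hp_dist u h)
      · rintro rfl
        exact ⟨(hp_adj u h).symm, hp_dist u h⟩
  -- the star lemma
  have hstar : ∀ f : V → V → ℝ,
      (∑ u : V, ∑ v ∈ T.neighborFinset u, f u v)
        = ∑ u ∈ Finset.univ.erase r, (f u (p u) + f (p u) u) := by
    intro f
    have hsplit : ∀ u : V, (∑ v ∈ T.neighborFinset u, f u v)
        = (∑ v ∈ (T.neighborFinset u).filter (fun v => T.dist r v + 1 = T.dist r u), f u v)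
          + ∑ v ∈ (T.neighborFinset u).filter (fun v => T.dist r u + 1 = T.dist r v), f u v := by
      intro u
      rw [← Finset.sum_filter_add_sum_filter_not (T.neighborFinset u)
        (fun v => T.dist r v + 1 = T.dist r u)]
      congr 1
      apply Finset.sum_congr _ (fun _ _ => rfl)
      ext v
      simp only [Finset.mem_filter, SimpleGraph.mem_neighborFinset]
      constructor
      · rintro ⟨hadj, hne⟩; exact ⟨hadj, (htri u v hadj).resolve_right hne⟩
      · rintro ⟨hadj, heq⟩; exact ⟨hadj, by omega⟩
    have hpart1 : ∀ g : V → V → ℝ,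
        (∑ u : V, ∑ v ∈ (T.neighborFinset u).filter (fun v => T.dist r v + 1 = T.dist r u), g u v)
          = ∑ u ∈ Finset.univ.erase r, g u (p u) := by
      intro g
      have hterm : ∀ u : V,
          (∑ v ∈ (T.neighborFinset u).filter (fun v => T.dist r v + 1 = T.dist r u), g u v)
            = if u = r then 0 else g u (p u) := by
        intro u
        rw [hfilter u]
        split_ifs with h <;> simp
      calc (∑ u : V, ∑ v ∈ (T.neighborFinset u).filter
              (fun v => T.dist r v + 1 = T.dist r u), g u v)
          = ∑ u : V, if u = r then 0 else g u (p u) := by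
            exact Finset.sum_congr rfl fun u _ => hterm u
        _ = ∑ u ∈ Finset.univ.erase r, (if u = r then 0 else g u (p u)) := by
            rw [← Finset.add_sum_erase _ _ (Finset.mem_univ r)]
            simp
        _ = ∑ u ∈ Finset.univ.erase r, g u (p u) := by
            apply Finset.sum_congr rfl
            intro u hu
            rw [if_neg (Finset.ne_of_mem_erase hu)]
    have hswap : (∑ u : V, ∑ v ∈ (T.neighborFinset u).filter
            (fun v => T.dist r u + 1 = T.dist r v), f u v)
        = ∑ v : V, ∑ u ∈ (T.neighborFinset v).filter
            (fun u => T.dist r u + 1 = T.dist r v), f u v := by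
      simp only [SimpleGraph.neighborFinset_eq_filter, Finset.filter_filter, Finset.sum_filter]
      rw [Finset.sum_comm]
      refine Finset.sum_congr rfl fun v _ => Finset.sum_congr rfl fun u _ => ?_
      by_cases hadj : T.Adj u v
      · simp [hadj, hadj.symm]
      · simp only [hadj, false_and, if_false]
        exact (if_neg fun hc => hadj hc.1.symm).symm
    have hpart2 : (∑ u : V, ∑ v ∈ (T.neighborFinset u).filter
            (fun v => T.dist r u + 1 = T.dist r v), f u v)
        = ∑ v ∈ Finset.univ.erase r, f (p v) v := by
      rw [hswap]
      have hterm : ∀ v : V,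
          (∑ u ∈ (T.neighborFinset v).filter (fun u => T.dist r u + 1 = T.dist r v), f u v)
            = if v = r then 0 else f (p v) v := by
        intro v
        rw [hfilter v]
        split_ifs with h <;> simp
      calc (∑ v : V, ∑ u ∈ (T.neighborFinset v).filter
              (fun u => T.dist r u + 1 = T.dist r v), f u v)
          = ∑ v : V, if v = r then 0 else f (p v) v :=
            Finset.sum_congr rfl fun v _ => hterm v
        _ = ∑ v ∈ Finset.univ.erase r, (if v = r then 0 else f (p v) v) := by
            rw [← Finset.add_sum_erase _ _ (Finset.mem_univ r)]
            simp
        _ = ∑ v ∈ Finset.univ.erase r, f (p v) v := by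
            apply Finset.sum_congr rfl
            intro v hv
            rw [if_neg (Finset.ne_of_mem_erase hv)]
    calc (∑ u : V, ∑ v ∈ T.neighborFinset u, f u v)
        = ∑ u : V, ((∑ v ∈ (T.neighborFinset u).filter
              (fun v => T.dist r v + 1 = T.dist r u), f u v)
            + ∑ v ∈ (T.neighborFinset u).filter (fun v => T.dist r u + 1 = T.dist r v), f u v) :=
          Finset.sum_congr rfl fun u _ => hsplit u
      _ = (∑ u : V, ∑ v ∈ (T.neighborFinset u).filter
              (fun v => T.dist r v + 1 = T.dist r u), f u v)
          + ∑ u : V, ∑ v ∈ (T.neighborFinset u).filter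
              (fun v => T.dist r u + 1 = T.dist r v), f u v := Finset.sum_add_distrib
      _ = (∑ u ∈ Finset.univ.erase r, f u (p u)) + ∑ u ∈ Finset.univ.erase r, f (p u) u := by
          rw [hpart1, hpart2]
      _ = ∑ u ∈ Finset.univ.erase r, (f u (p u) + f (p u) u) := Finset.sum_add_distrib.symm
  -- the quadratic form identity
  have key : ∀ x : V → ℝ, star x ⬝ᵥ (defLap T s *ᵥ x)
      = (1 - s^2) * (x r * x r) + ∑ v ∈ Finset.univ.erase r, (x v - s * x (p v))^2 := by
    intro x
    have hstarx : star x = x := by ext v; simp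
    rw [hstarx]
    have hL : x ⬝ᵥ (defLap T s *ᵥ x)
        = (∑ v : V, x v * x v)
          - s * (∑ u : V, ∑ v ∈ T.neighborFinset u, x u * x v)
          + s^2 * ((∑ v : V, (T.degree v : ℝ) * (x v * x v)) - ∑ v : V, x v * x v) := by
      show x ⬝ᵥ (((1 : Matrix V V ℝ) - s • (T.adjMatrix ℝ)
          + s ^ 2 • (Matrix.diagonal (fun v => (T.degree v : ℝ)) - 1)) *ᵥ x) = _
      rw [Matrix.add_mulVec, Matrix.sub_mulVec, Matrix.smul_mulVec,
        Matrix.smul_mulVec, Matrix.sub_mulVec, Matrix.one_mulVec,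
        dotProduct_add, dotProduct_sub, dotProduct_smul, dotProduct_smul, dotProduct_sub]
      have hxx : x ⬝ᵥ x = ∑ v : V, x v * x v := rfl
      have hadj : x ⬝ᵥ (T.adjMatrix ℝ *ᵥ x) = ∑ u : V, ∑ v ∈ T.neighborFinset u, x u * x v := by
        rw [SimpleGraph.dotProduct_mulVec_adjMatrix]
        refine Finset.sum_congr rfl fun u _ => ?_
        rw [SimpleGraph.neighborFinset_eq_filter, Finset.sum_filter]
      have hdiag : x ⬝ᵥ (Matrix.diagonal (fun v => (T.degree v : ℝ)) *ᵥ x)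
          = ∑ v : V, (T.degree v : ℝ) * (x v * x v) := by
        simp only [dotProduct, Matrix.mulVec_diagonal]
        exact Finset.sum_congr rfl fun v _ => by ring
      rw [hxx, hadj, hdiag, smul_eq_mul, smul_eq_mul]
    have e1 := hstar (fun u v => x u * x v)
    have e5 : ∑ v ∈ Finset.univ.erase r, (x (p v) * x v)
        = ∑ v ∈ Finset.univ.erase r, (x v * x (p v)) :=
      Finset.sum_congr rfl fun v _ => mul_comm _ _
    have e1' : (∑ u : V, ∑ v ∈ T.neighborFinset u, x u * x v)
        = 2 * ∑ v ∈ Finset.univ.erase r, (x v * x (p v)) := by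
      rw [e1, Finset.sum_add_distrib, e5, two_mul]
    have e2 := hstar (fun u v => x u * x u)
    have e2' : (∑ u : V, ∑ v ∈ T.neighborFinset u, x u * x u)
        = ∑ u : V, (T.degree u : ℝ) * (x u * x u) := by
      refine Finset.sum_congr rfl fun u _ => ?_
      rw [Finset.sum_const, SimpleGraph.card_neighborFinset_eq_degree, nsmul_eq_mul]
    have e2'' : (∑ v : V, (T.degree v : ℝ) * (x v * x v))
        = (∑ v ∈ Finset.univ.erase r, x v * x v)
          + ∑ v ∈ Finset.univ.erase r, (x (p v) * x (p v)) := by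
      rw [← e2', e2, Finset.sum_add_distrib]
    have e3 : (∑ v ∈ Finset.univ.erase r, x v * x v) = (∑ v : V, x v * x v) - x r * x r := by
      rw [← Finset.add_sum_erase Finset.univ (fun v => x v * x v) (Finset.mem_univ r)]
      ring
    have e4 : ∑ v ∈ Finset.univ.erase r, (x v - s * x (p v))^2
        = (∑ v ∈ Finset.univ.erase r, x v * x v)
          - 2 * s * (∑ v ∈ Finset.univ.erase r, (x v * x (p v)))
          + s^2 * ∑ v ∈ Finset.univ.erase r, (x (p v) * x (p v)) := by
      rw [Finset.mul_sum, Finset.mul_sum, ← Finset.sum_sub_distrib, ← Finset.sum_add_distrib]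
      exact Finset.sum_congr rfl fun v _ => by ring
    rw [hL, e4, e1', e2'', e3]
    ring
  -- symmetry
  have hherm : (defLap T s).IsHermitian := by
    have htr : (defLap T s)ᵀ = defLap T s := by
      show ((1 : Matrix V V ℝ) - s • (T.adjMatrix ℝ)
          + s ^ 2 • (Matrix.diagonal (fun v => (T.degree v : ℝ)) - 1))ᵀ = _
      rw [Matrix.transpose_add, Matrix.transpose_sub, Matrix.transpose_smul,
        Matrix.transpose_smul, Matrix.transpose_sub, Matrix.transpose_one,
        Matrix.diagonal_transpose, SimpleGraph.transpose_adjMatrix]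
      rfl
    rw [Matrix.IsHermitian, Matrix.conjTranspose_eq_transpose_of_trivial, htr]
  constructor
  · intro hPD
    by_contra hs
    push_neg at hs
    have hs2 : 1 ≤ s^2 := by nlinarith [sq_abs s, abs_nonneg s]
    set x : V → ℝ := fun v => s ^ (T.dist r v) with hx_def
    have hxr : x r = 1 := by simp [hx_def, SimpleGraph.dist_self]
    have hx0 : x ≠ 0 := fun h0 => by
      have := congrFun h0 r; rw [hxr] at this; norm_num at this
    have hQ := hPD.dotProduct_mulVec_pos hx0
    rw [key x] at hQ
    have hz : ∀ v ∈ Finset.univ.erase r, (x v - s * x (p v))^2 = 0 := by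
      intro v hv
      have hvr : v ≠ r := Finset.ne_of_mem_erase hv
      have hd := hp_dist v hvr
      have hxv : x v = s * x (p v) := by
        rw [hx_def]
        simp only
        rw [← hd, pow_succ]
        ring
      rw [hxv]; ring
    rw [Finset.sum_eq_zero hz, hxr] at hQ
    nlinarith [hQ]
  · intro hs
    have hs2 : s^2 < 1 := by nlinarith [sq_abs s, abs_nonneg s]
    refine Matrix.PosDef.of_dotProduct_mulVec_pos hherm fun x hx0 => ?_
    rw [key x]
    have hnn1 : (0:ℝ) ≤ (1 - s^2) * (x r * x r) :=
      mul_nonneg (by linarith) (mul_self_nonneg _)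
    have hnn2 : (0:ℝ) ≤ ∑ v ∈ Finset.univ.erase r, (x v - s * x (p v))^2 :=
      Finset.sum_nonneg fun v _ => sq_nonneg _
    rcases (add_nonneg hnn1 hnn2).lt_or_eq with h | h
    · exact h
    · exfalso
      have h12 := (add_eq_zero_iff_of_nonneg hnn1 hnn2).mp h.symm
      have hxr : x r = 0 := by
        rcases mul_eq_zero.mp h12.1 with h' | h'
        · exact absurd h' (by linarith : (1:ℝ) - s^2 ≠ 0)
        · exact mul_self_eq_zero.mp h'
      have hrec : ∀ v, v ≠ r → x v = s * x (p v) := by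
        intro v hvr
        have hsq := (Finset.sum_eq_zero_iff_of_nonneg (fun v _ => sq_nonneg _)).mp h12.2 v
          (Finset.mem_erase.mpr ⟨hvr, Finset.mem_univ v⟩)
        have := pow_eq_zero_iff (n := 2) (by norm_num) |>.mp hsq
        linarith [this]
      have hzero : ∀ n : ℕ, ∀ v : V, T.dist r v = n → x v = 0 := by
        intro n
        induction n using Nat.strong_induction_on with
        | _ n ih =>
          intro v hv
          by_cases hvr : v = r
          · rw [hvr]; exact hxr
          · have hd := hp_dist v hvr
            have hpz : x (p v) = 0 := ih (T.dist r (p v)) (by omega) _ rfl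
            rw [hrec v hvr, hpz, mul_zero]
      exact hx0 (funext fun v => hzero _ v rfl)
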